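/- Let G be a pseudo strongly regular graph. Then the line graph L(G) is pseudo strongly regular with parameter μ = 0 if and only if every connected component of G is a single vertex, a single edge (K₂), or a triangle (K₃). -/

import Mathlib

open SimpleGraph

def SimpleGraph.IsPseudoSRG {V : Type*} [Fintype V] (G : SimpleGraph V) (n k m : ℕ) : Prop :=
  Fintype.card V = n ∧ (∀ v : V, (G.neighborSet v).ncard = k) ∧
    ∀ u v : V, u ≠ v → ¬G.Adj u v → (G.commonNeighbors u v).ncard = m

/-- for a pseudo strongly regular graph `G`, the line graph `L(G)` is pseudo
strongly regular with parameter `μ = 0` iff every connected component of `G` is a single vertex,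
a single edge, or a triangle (equivalently: any two reachable vertices are equal or adjacent, and
every component has at most 3 vertices). -/
theorem stmt_15 {V : Type*} [Fintype V] [DecidableEq V] (G : SimpleGraph V) [DecidableRel G.Adj]
    (n k μ : ℕ) (hG : G.IsPseudoSRG n k μ) :
    (∃ m d : ℕ, G.lineGraph.IsPseudoSRG m d 0) ↔
      ((∀ v w : V, G.Reachable v w → v = w ∨ G.Adj v w) ∧
        ∀ v : V, {w : V | G.Reachable v w}.ncard ≤ 3) := by
  obtain ⟨hn, hdeg, hmu⟩ := hG
  constructor
  · rintro ⟨m, d, -, -, h0⟩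
    -- no path on 4 distinct vertices
    have noP4 : ∀ a b c d : V, G.Adj a b → G.Adj b c → G.Adj c d →
        a ≠ c → a ≠ d → b ≠ d → False := by
      intro a b c d hab hbc hcd hac had hbd
      have he : s(a, b) ∈ G.edgeSet := hab
      have hf : s(c, d) ∈ G.edgeSet := hcd
      have hg : s(b, c) ∈ G.edgeSet := hbc
      have hne : (⟨s(a, b), he⟩ : G.edgeSet) ≠ ⟨s(c, d), hf⟩ := by
        intro h
        rcases Sym2.eq_iff.mp (Subtype.ext_iff.mp h) with ⟨h1, -⟩ | ⟨h1, -⟩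
        · exact hac h1
        · exact had h1
      have hnadj : ¬ G.lineGraph.Adj ⟨s(a, b), he⟩ ⟨s(c, d), hf⟩ := by
        rw [lineGraph_adj_iff_exists]
        rintro ⟨-, v, hv1, hv2⟩
        simp only [Sym2.mem_iff] at hv1 hv2
        rcases hv1 with rfl | rfl <;> rcases hv2 with rfl | rfl
        · exact hac rfl
        · exact had rfl
        · exact (G.ne_of_adj hbc) rfl
        · exact hbd rfl
      have hzero := h0 _ _ hne hnadj
      have hmem : (⟨s(b, c), hg⟩ : G.edgeSet) ∈
          G.lineGraph.commonNeighbors ⟨s(a, b), he⟩ ⟨s(c, d), hf⟩ := by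
        constructor
        · rw [mem_neighborSet, lineGraph_adj_iff_exists]
          refine ⟨?_, b, Sym2.mem_mk_right a b, Sym2.mem_mk_left b c⟩
          intro h
          rcases Sym2.eq_iff.mp (Subtype.ext_iff.mp h) with ⟨h1, -⟩ | ⟨h1, -⟩
          · exact (G.ne_of_adj hab) h1
          · exact hac h1
        · rw [mem_neighborSet, lineGraph_adj_iff_exists]
          refine ⟨?_, c, Sym2.mem_mk_left c d, Sym2.mem_mk_right b c⟩
          intro h
          rcases Sym2.eq_iff.mp (Subtype.ext_iff.mp h) with ⟨h1, h2⟩ | ⟨-, h2⟩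
          · exact (G.ne_of_adj hbc) h1.symm
          · exact hbd h2.symm
      have : 0 < (G.lineGraph.commonNeighbors
          (⟨s(a, b), he⟩ : G.edgeSet) ⟨s(c, d), hf⟩).ncard :=
        (Set.nonempty_of_mem hmem).ncard_pos
      omega
    -- completeness step
    have step : ∀ u v w : V, G.Adj u v → G.Adj v w → u ≠ w → G.Adj u w := by
      intro u v w huv hvw hne
      by_contra huw
      have hk2 : 1 < k := by
        have hsub : ({u, w} : Set V) ⊆ G.neighborSet v := by
          rintro x (rfl | rfl)
          · exact G.adj_symm huv
          · exact hvw
        have := Set.ncard_le_ncard hsub (Set.toFinite _)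
        rw [Set.ncard_pair hne, hdeg] at this
        omega
      have : 1 < (G.neighborSet u).ncard := by rw [hdeg]; exact hk2
      obtain ⟨x, hx, hxv⟩ := Set.exists_ne_of_one_lt_ncard this v
      have hxw : x ≠ w := fun h => huw (h ▸ hx)
      exact noP4 x u v w (G.adj_symm hx) huv hvw hxv hxw hne
    have hcomp : ∀ v w : V, G.Reachable v w → v = w ∨ G.Adj v w := by
      intro v w hvw
      obtain ⟨p⟩ := hvw
      induction p with
      | nil => exact Or.inl rfl
      | @cons u x w h p ih =>
        rcases ih with rfl | hadj
        · exact Or.inr h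
        · rcases eq_or_ne u w with rfl | hne
          · exact Or.inl rfl
          · exact Or.inr (step u x w h hadj hne)
    refine ⟨hcomp, fun v => ?_⟩
    have hsub : {w : V | G.Reachable v w} ⊆ insert v (G.neighborSet v) := by
      intro w hw
      rcases hcomp v w hw with rfl | hadj
      · exact Set.mem_insert _ _
      · exact Set.mem_insert_of_mem _ hadj
    have hk2 : k ≤ 2 := by
      by_contra hk
      push_neg at hk
      have h3 : 2 < (G.neighborSet v).ncard := by rw [hdeg]; omega
      obtain ⟨a, ha⟩ : (G.neighborSet v).Nonempty :=
        Set.nonempty_of_ncard_ne_zero (by omega)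
      obtain ⟨b, hb, hba⟩ := Set.exists_ne_of_one_lt_ncard
        (s := G.neighborSet v) (by omega) a
      obtain ⟨c, hc⟩ : ((G.neighborSet v) \ {a, b}).Nonempty := by
        rw [Set.nonempty_iff_ne_empty]
        intro hemp
        rw [Set.diff_eq_empty] at hemp
        have hle := Set.ncard_le_ncard hemp (Set.toFinite _)
        rw [Set.ncard_pair hba.symm] at hle
        omega
      obtain ⟨hc, hca, hcb⟩ : c ∈ G.neighborSet v ∧ c ≠ a ∧ c ≠ b := by
        obtain ⟨h1, h2⟩ := hc
        simp only [Set.mem_insert_iff, Set.mem_singleton_iff, not_or] at h2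
        exact ⟨h1, h2.1, h2.2⟩
      have hvab : G.Adj a b := step a v b (G.adj_symm ha) hb hba.symm
      exact noP4 a b v c hvab (G.adj_symm hb) hc
        (fun h => (G.ne_of_adj ha) h.symm) hca.symm hcb.symm
    calc {w : V | G.Reachable v w}.ncard
        ≤ (insert v (G.neighborSet v)).ncard := Set.ncard_le_ncard hsub (Set.toFinite _)
      _ ≤ (G.neighborSet v).ncard + 1 := Set.ncard_insert_le _ _
      _ ≤ 3 := by rw [hdeg]; omega
  · rintro ⟨hcomp, hsize⟩
    refine ⟨Fintype.card G.edgeSet, 2 * k - 2, rfl, ?_, ?_⟩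
    · -- regularity of the line graph
      rintro ⟨e, he⟩
      induction e using Sym2.ind with
      | _ a b =>
      have he' : G.Adj a b := he
      have hab : a ≠ b := G.ne_of_adj he'
      have hbmem : b ∈ G.neighborSet a := he'
      have hk1 : 1 ≤ k := by
        rw [← hdeg a]
        exact (Set.nonempty_of_mem hbmem).ncard_pos
      have hk2 : k ≤ 2 := by
        have hsub : insert a (G.neighborSet a) ⊆ {w : V | G.Reachable a w} := by
          rintro x (rfl | hx)
          · exact Reachable.refl _
          · exact Adj.reachable hx
        have h1 := Set.ncard_le_ncard hsub (Set.toFinite _)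
        have h2 : (insert a (G.neighborSet a)).ncard = k + 1 := by
          rw [Set.ncard_insert_of_notMem G.notMem_neighborSet_self, hdeg]
        have := hsize a
        omega
      interval_cases k
      · -- k = 1 : the component is a single edge
        have hNa : G.neighborSet a = {b} := by
          obtain ⟨x, hx⟩ := Set.ncard_eq_one.mp (hdeg a)
          rw [hx] at hbmem ⊢
          rw [Set.mem_singleton_iff] at hbmem
          rw [hbmem]
        have hNb : G.neighborSet b = {a} := by
          obtain ⟨x, hx⟩ := Set.ncard_eq_one.mp (hdeg b)
          have hmem : a ∈ G.neighborSet b := G.adj_symm he'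
          rw [hx] at hmem ⊢
          rw [Set.mem_singleton_iff] at hmem
          rw [hmem]
        have key : ∀ f (hf : f ∈ G.edgeSet),
            ¬ G.lineGraph.Adj ⟨s(a, b), he⟩ ⟨f, hf⟩ := by
          intro f
          induction f using Sym2.ind with
          | _ c d =>
          intro hf hadj
          rw [lineGraph_adj_iff_exists] at hadj
          obtain ⟨hne, x, hx1, hx2⟩ := hadj
          apply hne
          apply Subtype.ext
          have hx1' : x ∈ s(a, b) := hx1
          have hx2' : x ∈ s(c, d) := hx2
          rw [Sym2.mem_iff] at hx1' hx2'
          have hf' : G.Adj c d := hf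
          have hcd : d ∈ G.neighborSet c := hf'
          have hdc : c ∈ G.neighborSet d := G.adj_symm hf'
          rcases hx1' with rfl | rfl <;> rcases hx2' with rfl | rfl
          · rw [hNa, Set.mem_singleton_iff] at hcd; subst hcd; rfl
          · rw [hNa, Set.mem_singleton_iff] at hdc; subst hdc; exact Sym2.eq_swap
          · rw [hNb, Set.mem_singleton_iff] at hcd; subst hcd; exact Sym2.eq_swap
          · rw [hNb, Set.mem_singleton_iff] at hdc; subst hdc; rfl
        have hempty : G.lineGraph.neighborSet ⟨s(a, b), he⟩ = ∅ := by
          rw [Set.eq_empty_iff_forall_notMem]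
          rintro ⟨f, hf⟩ hmem
          exact key f hf hmem
        rw [hempty]
        simp
      · -- k = 2 : the component is a triangle
        obtain ⟨x, y, hxy, hNa⟩ := Set.ncard_eq_two.mp (hdeg a)
        obtain ⟨w, hwb, hNa⟩ : ∃ w, w ≠ b ∧ G.neighborSet a = {b, w} := by
          rcases (by rw [hNa] at hbmem; exact hbmem : b = x ∨ b = y) with rfl | rfl
          · exact ⟨y, hxy.symm, hNa⟩
          · exact ⟨x, hxy, by rw [hNa, Set.pair_comm]⟩
        have haw : G.Adj a w := by
          have : w ∈ G.neighborSet a := by rw [hNa]; exact Or.inr rfl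
          exact this
        have hwa : w ≠ a := fun h => G.ne_of_adj haw h.symm
        have hbw : G.Adj b w := by
          rcases hcomp b w ((G.adj_symm he').reachable.trans haw.reachable) with h | h
          · exact absurd h.symm hwb
          · exact h
        have hNb : G.neighborSet b = {a, w} := by
          have hsub : ({a, w} : Set V) ⊆ G.neighborSet b := by
            rintro x (rfl | rfl)
            · exact G.adj_symm he'
            · exact hbw
          refine (Set.eq_of_subset_of_ncard_le hsub ?_ (Set.toFinite _)).symm
          rw [hdeg, Set.ncard_pair (fun h => hwa h.symm)]
        have haw' : s(a, w) ∈ G.edgeSet := haw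
        have hbw' : s(b, w) ∈ G.edgeSet := hbw
        have key : ∀ f (hf : f ∈ G.edgeSet),
            G.lineGraph.Adj ⟨s(a, b), he⟩ ⟨f, hf⟩ → f = s(a, w) ∨ f = s(b, w) := by
          intro f
          induction f using Sym2.ind with
          | _ c d =>
          intro hf hadj
          rw [lineGraph_adj_iff_exists] at hadj
          obtain ⟨hne, x, hx1, hx2⟩ := hadj
          have hne' : s(a, b) ≠ s(c, d) := fun h => hne (Subtype.ext h)
          have hx1' : x ∈ s(a, b) := hx1
          have hx2' : x ∈ s(c, d) := hx2
          rw [Sym2.mem_iff] at hx1' hx2'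
          have hf' : G.Adj c d := hf
          have hcd : d ∈ G.neighborSet c := hf'
          have hdc : c ∈ G.neighborSet d := G.adj_symm hf'
          rcases hx1' with rfl | rfl <;> rcases hx2' with rfl | rfl
          · rw [hNa, Set.mem_insert_iff, Set.mem_singleton_iff] at hcd
            rcases hcd with rfl | rfl
            · exact absurd rfl hne'
            · exact Or.inl rfl
          · rw [hNa, Set.mem_insert_iff, Set.mem_singleton_iff] at hdc
            rcases hdc with rfl | rfl
            · exact absurd Sym2.eq_swap hne'
            · exact Or.inl Sym2.eq_swap
          · rw [hNb, Set.mem_insert_iff, Set.mem_singleton_iff] at hcd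
            rcases hcd with rfl | rfl
            · exact absurd Sym2.eq_swap hne'
            · exact Or.inr rfl
          · rw [hNb, Set.mem_insert_iff, Set.mem_singleton_iff] at hdc
            rcases hdc with rfl | rfl
            · exact absurd rfl hne'
            · exact Or.inr Sym2.eq_swap
        have hset : G.lineGraph.neighborSet ⟨s(a, b), he⟩ =
            {⟨s(a, w), haw'⟩, ⟨s(b, w), hbw'⟩} := by
          ext ⟨f, hf⟩
          simp only [mem_neighborSet, Set.mem_insert_iff, Set.mem_singleton_iff]
          constructor
          · intro h
            rcases key f hf h with rfl | rfl
            · exact Or.inl rfl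
            · exact Or.inr rfl
          · intro h
            have hval : f = s(a, w) ∨ f = s(b, w) := by
              rcases h with h | h
              · exact Or.inl (Subtype.ext_iff.mp h)
              · exact Or.inr (Subtype.ext_iff.mp h)
            rw [lineGraph_adj_iff_exists]
            rcases hval with rfl | rfl
            · refine ⟨?_, a, Sym2.mem_mk_left a b, Sym2.mem_mk_left a w⟩
              intro hh
              rcases Sym2.eq_iff.mp (Subtype.ext_iff.mp hh) with ⟨-, h2⟩ | ⟨h2, -⟩
              · exact hwb h2.symm
              · exact hwa h2.symm
            · refine ⟨?_, b, Sym2.mem_mk_right a b, Sym2.mem_mk_left b w⟩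
              intro hh
              rcases Sym2.eq_iff.mp (Subtype.ext_iff.mp hh) with ⟨h2, -⟩ | ⟨h2, -⟩
              · exact hab h2
              · exact hwa h2.symm
        rw [hset, Set.ncard_pair]
        intro h
        rcases Sym2.eq_iff.mp (Subtype.ext_iff.mp h) with ⟨h1, -⟩ | ⟨h1, -⟩
        · exact hab h1
        · exact hwa h1.symm
    · -- μ = 0
      rintro ⟨e, he⟩ ⟨f, hf⟩ hne hnadj
      rw [Set.ncard_eq_zero (Set.toFinite _)]
      rw [Set.eq_empty_iff_forall_notMem]
      rintro ⟨g, hg⟩ hgmem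
      obtain ⟨hg1, hg2⟩ := hgmem
      rw [mem_neighborSet, lineGraph_adj_iff_exists] at hg1 hg2
      obtain ⟨-, x, hxe, hxg⟩ := hg1
      obtain ⟨-, y, hyf, hyg⟩ := hg2
      -- e and f are disjoint
      have hdisj : ∀ z : V, z ∈ e → z ∈ f → False := by
        intro z hz1 hz2
        exact hnadj ((lineGraph_adj_iff_exists).mpr ⟨hne, z, hz1, hz2⟩)
      induction e using Sym2.ind with
      | _ a b =>
      induction f using Sym2.ind with
      | _ c d =>
      induction g using Sym2.ind with
      | _ p q =>
      have he' : G.Adj a b := he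
      have hf' : G.Adj c d := hf
      have hg' : G.Adj p q := hg
      have hxe' : x ∈ s(a, b) := hxe
      have hxg' : x ∈ s(p, q) := hxg
      have hyf' : y ∈ s(c, d) := hyf
      have hyg' : y ∈ s(p, q) := hyg
      rw [Sym2.mem_iff] at hxe' hxg' hyf' hyg'
      have hxyne : x ≠ y := by
        intro h
        refine hdisj x ?_ ?_
        · rcases hxe' with rfl | rfl
          · exact Sym2.mem_mk_left _ _
          · exact Sym2.mem_mk_right _ _
        · rw [h]
          rcases hyf' with rfl | rfl
          · exact Sym2.mem_mk_left _ _
          · exact Sym2.mem_mk_right _ _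
      have hxy : G.Adj x y := by
        rcases hxg' with rfl | rfl <;> rcases hyg' with rfl | rfl
        · exact absurd rfl hxyne
        · exact hg'
        · exact G.adj_symm hg'
        · exact absurd rfl hxyne
      have hreach : ({a, b, c, d} : Set V) ⊆ {w : V | G.Reachable a w} := by
        have h1 : G.Reachable a x := by
          rcases hxe' with rfl | rfl
          · exact Reachable.refl _
          · exact Adj.reachable he'
        have h2 : G.Reachable a y := h1.trans hxy.reachable
        have h3 : G.Reachable a c := by
          rcases hyf' with rfl | rfl
          · exact h2
          · exact h2.trans (Adj.reachable (G.adj_symm hf'))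
        rintro z (rfl | rfl | rfl | rfl)
        · exact Reachable.refl _
        · exact Adj.reachable he'
        · exact h3
        · exact h3.trans (Adj.reachable hf')
      have hab : a ≠ b := G.ne_of_adj he'
      have hcd : c ≠ d := G.ne_of_adj hf'
      have hac : a ≠ c := fun h =>
        hdisj a (Sym2.mem_mk_left _ _) (by rw [h]; exact Sym2.mem_mk_left _ _)
      have had : a ≠ d := fun h =>
        hdisj a (Sym2.mem_mk_left _ _) (by rw [h]; exact Sym2.mem_mk_right _ _)
      have hbc : b ≠ c := fun h =>
        hdisj b (Sym2.mem_mk_right _ _) (by rw [h]; exact Sym2.mem_mk_left _ _)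
      have hbd : b ≠ d := fun h =>
        hdisj b (Sym2.mem_mk_right _ _) (by rw [h]; exact Sym2.mem_mk_right _ _)
      have h4 : ({a, b, c, d} : Set V).ncard = 4 := by
        rw [Set.ncard_insert_of_notMem (by simp [hab, hac, had]),
          Set.ncard_insert_of_notMem (by simp [hbc, hbd]),
          Set.ncard_insert_of_notMem (by simp [hcd]),
          Set.ncard_singleton]
      have hle := Set.ncard_le_ncard hreach (Set.toFinite _)
      have := hsize a
      omega
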